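/- Let Ω ⊆ ℂ be open and connected, and u, v : Ω → ℂ holomorphic with |u(x)| > |v(x)| for all x ∈ Ω. Define b : Ω → ℂ by b(x) = (u(x)·v′(x) − u′(x)·v(x))/(|u(x)|² − |v(x)|²). Then: (i) either b is identically zero on Ω, or the zero set of b is discrete in Ω (zeroes are isolated); and (ii) at every zero x₀ of b, the antiholomorphic Wirtinger derivative vanishes: (∂b/∂x̄)(x₀) = 0. (On a leaf of a semiholomorphic foliation, the coefficient b of the antiholomorphic part of Bott's connection is either identically zero or has isolated zeroes, and ∂b/∂x̄ = 0 at each isolated zero.) -/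

import Mathlib

open Complex ComplexConjugate Filter

/-- Wirtinger derivative `∂g/∂x̄` of `g : ℂ → ℂ`, via the real Fréchet derivative. -/
noncomputable def wd1bar (g : ℂ → ℂ) (x : ℂ) : ℂ :=
  (1 / 2 : ℂ) * (fderiv ℝ g x 1 + Complex.I * fderiv ℝ g x Complex.I)

/-- On a leaf of a semiholomorphic foliation with holonomy having linear part
`φ_x(y) = u(x)y + v(x)·conj(y)` (`u, v` holomorphic on a connected open `Ω`, `|u| > |v|`),
the coefficient `b = (u·v′ − u′·v)/(|u|² − |v|²)` of the antiholomorphic part of Bott's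
connection is either identically zero or has isolated zeroes; moreover `∂b/∂x̄ = 0` at
every zero of `b`. -/
theorem stmt12 (Ω : Set ℂ) (hΩ : IsOpen Ω) (hconn : IsConnected Ω)
    (u v : ℂ → ℂ)
    (hu : DifferentiableOn ℂ u Ω) (hv : DifferentiableOn ℂ v Ω)
    (huv : ∀ x ∈ Ω, ‖v x‖ < ‖u x‖)
    (b : ℂ → ℂ)
    (hb : ∀ x : ℂ, b x = (u x * deriv v x - deriv u x * v x) /
        ((‖u x‖ ^ 2 - ‖v x‖ ^ 2 : ℝ) : ℂ)) :
    ((∀ x ∈ Ω, b x = 0) ∨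
      (∀ x₀ ∈ Ω, b x₀ = 0 → ∀ᶠ x in nhdsWithin x₀ {x₀}ᶜ, b x ≠ 0)) ∧
    (∀ x₀ ∈ Ω, b x₀ = 0 → wd1bar b x₀ = 0) := by
  set W : ℂ → ℂ := fun x => u x * deriv v x - deriv u x * v x with hW
  -- the denominator is nonzero on Ω
  have hA : ∀ x ∈ Ω, (‖u x‖ ^ 2 - ‖v x‖ ^ 2 : ℝ) ≠ 0 := by
    intro x hx
    have h1 : ‖v x‖ < ‖u x‖ := huv x hx
    have h2 : ‖v x‖ ^ 2 < ‖u x‖ ^ 2 := by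
      apply pow_lt_pow_left₀ h1 (norm_nonneg _) (by norm_num)
    linarith
  have hAc : ∀ x ∈ Ω, ((‖u x‖ ^ 2 - ‖v x‖ ^ 2 : ℝ) : ℂ) ≠ 0 := by
    intro x hx
    exact_mod_cast Complex.ofReal_ne_zero.mpr (hA x hx)
  -- W is zero at zeros of b
  have hWz : ∀ x ∈ Ω, b x = 0 → W x = 0 := by
    intro x hx hbx
    have := hb x
    rw [hbx] at this
    rcases div_eq_zero_iff.mp this.symm with h | h
    · exact h
    · exact absurd h (hAc x hx)
  -- analyticity of W on Ω
  have hua : AnalyticOnNhd ℂ u Ω := hu.analyticOnNhd hΩ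
  have hva : AnalyticOnNhd ℂ v Ω := hv.analyticOnNhd hΩ
  have hWa : AnalyticOnNhd ℂ W Ω := ((hua.mul hva.deriv).sub (hua.deriv.mul hva))
  constructor
  · by_cases hcase : ∀ x ∈ Ω, W x = 0
    · left
      intro x hx
      rw [hb x]
      exact div_eq_zero_iff.mpr (Or.inl (hcase x hx))
    · right
      intro x₀ hx₀ hbx₀
      rcases (hWa x₀ hx₀).eventually_eq_zero_or_eventually_ne_zero with h | h
      · exfalso
        apply hcase
        exact hWa.eqOn_zero_of_preconnected_of_eventuallyEq_zero hconn.isPreconnected hx₀ h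
      · have hmem : ∀ᶠ x in nhdsWithin x₀ {x₀}ᶜ, x ∈ Ω :=
          eventually_nhdsWithin_of_eventually_nhds (hΩ.eventually_mem hx₀)
        filter_upwards [h, hmem] with x hx1 hx2
        rw [hb x]
        exact div_ne_zero hx1 (hAc x hx2)
  · intro x₀ hx₀ hbx₀
    have hWx₀ : W x₀ = 0 := hWz x₀ hx₀ hbx₀
    -- g : the reciprocal of the denominator, written ℝ-differentiably
    set g : ℂ → ℂ := fun x => (u x * conj (u x) - v x * conj (v x))⁻¹ with hg
    have key : ∀ x, ((‖u x‖ ^ 2 - ‖v x‖ ^ 2 : ℝ) : ℂ) =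
        u x * conj (u x) - v x * conj (v x) := by
      intro x
      rw [Complex.ofReal_sub, Complex.sq_norm, Complex.sq_norm, Complex.mul_conj,
        Complex.mul_conj]
    have hbe : b = fun x => W x * g x := by
      funext x
      rw [hb x, key x, div_eq_mul_inv]
    -- differentiability
    have hWd : DifferentiableAt ℂ W x₀ := (hWa x₀ hx₀).differentiableAt
    have hud : DifferentiableAt ℝ u x₀ := ((hua x₀ hx₀).differentiableAt).restrictScalars ℝ
    have hvd : DifferentiableAt ℝ v x₀ := ((hva x₀ hx₀).differentiableAt).restrictScalars ℝ
    have hden : DifferentiableAt ℝ (fun x => u x * conj (u x) - v x * conj (v x)) x₀ :=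
      ((hud.mul (Complex.conjCLE.differentiable.differentiableAt.comp x₀ hud)).sub
        (hvd.mul (Complex.conjCLE.differentiable.differentiableAt.comp x₀ hvd)))
    have hdenne : (u x₀ * conj (u x₀) - v x₀ * conj (v x₀)) ≠ 0 := by
      rw [← key x₀]; exact hAc x₀ hx₀
    have hgd : DifferentiableAt ℝ g x₀ := hden.inv hdenne
    have hfd : fderiv ℝ b x₀ = W x₀ • fderiv ℝ g x₀ + g x₀ • fderiv ℝ W x₀ := by
      rw [hbe]
      exact fderiv_mul (hWd.restrictScalars ℝ) hgd
    have hres : fderiv ℝ W x₀ = (fderiv ℂ W x₀).restrictScalars ℝ :=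
      hWd.fderiv_restrictScalars ℝ
    have hLI : fderiv ℝ W x₀ Complex.I = Complex.I * fderiv ℝ W x₀ 1 := by
      rw [hres]
      have : (fderiv ℂ W x₀) Complex.I = (fderiv ℂ W x₀) (Complex.I • (1 : ℂ)) := by
        norm_num
      simp only [ContinuousLinearMap.coe_restrictScalars']
      rw [this, map_smul, smul_eq_mul]
    have e1 : fderiv ℝ b x₀ 1 = g x₀ * fderiv ℝ W x₀ 1 := by
      rw [hfd, hWx₀]
      simp [smul_eq_mul]
    have e2 : fderiv ℝ b x₀ Complex.I = g x₀ * (Complex.I * fderiv ℝ W x₀ 1) := by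
      rw [hfd, hWx₀]
      simp [smul_eq_mul, hLI]
    rw [wd1bar, e1, e2]
    linear_combination (1 / 2 : ℂ) * g x₀ * (fderiv ℝ W x₀ 1) * Complex.I_sq
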